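/- Let W = a x₀² + b x₀x₁ + c x₁² be a binary quadratic form. The system x₀ ∂W/∂x₀ = 0 and x₁ ∂W/∂x₁ = 0 has a solution with (x₀, x₁) ≠ (0,0) if and only if a c (b² − 4ac) = 0. (This is the GKZ determinant E_ℬ = ac(b²−4ac) for the pointset ℬ = {0, 1, 2} ⊂ ℤ.) -/
import Mathlib


/-- For the binary quadratic form `W = a x₀² + b x₀x₁ + c x₁²`, the system
`x₀ ∂W/∂x₀ = 0`, `x₁ ∂W/∂x₁ = 0` has a solution with `(x₀, x₁) ≠ (0,0)` if and only if
`a c (b² − 4ac) = 0`.  (This is the GKZ determinant `E_ℬ = ac(b²−4ac)` for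
`ℬ = {0,1,2} ⊂ ℤ`.) -/
theorem statement11 (a b c : ℂ) :
    (∃ x₀ x₁ : ℂ, ¬ (x₀ = 0 ∧ x₁ = 0) ∧
      x₀ * (2 * a * x₀ + b * x₁) = 0 ∧ x₁ * (b * x₀ + 2 * c * x₁) = 0) ↔
    a * c * (b ^ 2 - 4 * a * c) = 0 := by
  constructor
  · rintro ⟨x₀, x₁, hne, h0, h1⟩
    rcases mul_eq_zero.1 h0 with hx0 | hd0
    · -- x₀ = 0, so x₁ ≠ 0
      have hx1 : x₁ ≠ 0 := fun h => hne ⟨hx0, h⟩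
      subst hx0
      have : b * 0 + 2 * c * x₁ = 0 := by
        rcases mul_eq_zero.1 h1 with h | h
        · exact absurd h hx1
        · exact h
      have hc : c = 0 := by
        have h2 : (2:ℂ) * c * x₁ = 0 := by simpa using this
        rcases mul_eq_zero.1 h2 with h | h
        · rcases mul_eq_zero.1 h with h3 | h3
          · norm_num at h3
          · exact h3
        · exact absurd h hx1
      rw [hc]; ring
    · rcases mul_eq_zero.1 h1 with hx1 | hd1
      · -- x₁ = 0, x₀ ≠ 0
        have hx0 : x₀ ≠ 0 := fun h => hne ⟨h, hx1⟩
        subst hx1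
        have ha : a = 0 := by
          have h' : 2 * a * x₀ = 0 := by simpa using hd0
          rcases mul_eq_zero.1 h' with h | h
          · rcases mul_eq_zero.1 h with h2 | h2
            · norm_num at h2
            · exact h2
          · exact absurd h hx0
        rw [ha]; ring
      · -- both linear equations vanish
        have k0 : (b ^ 2 - 4 * a * c) * x₀ = 0 := by
          linear_combination b * hd1 - 2 * c * hd0
        have k1 : (b ^ 2 - 4 * a * c) * x₁ = 0 := by
          linear_combination b * hd0 - 2 * a * hd1
        by_cases hD : b ^ 2 - 4 * a * c = 0
        · rw [hD]; ring
        · exact absurd ⟨by simpa [hD] using k0, by simpa [hD] using k1⟩ hne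
  · intro h
    rcases mul_eq_zero.1 h with h | hd
    · rcases mul_eq_zero.1 h with ha | hc
      · exact ⟨1, 0, by simp, by rw [ha]; ring_nf, by ring⟩
      · exact ⟨0, 1, by simp, by ring, by rw [hc]; ring_nf⟩
    · by_cases ha : a = 0
      · exact ⟨1, 0, by simp, by rw [ha]; ring_nf, by ring⟩
      · refine ⟨-b / (2 * a), 1, by simp, ?_, ?_⟩
        · field_simp
          ring
        · field_simp
          linear_combination (-1 : ℂ) * hd
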